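/- Let (z_o*, z*) ∈ ℝ × ℝⁿ with |z*₁| ≥ |z*₂| ≥ ... ≥ |z*ₙ| (after permutation). There exists a unique nonnegative integer k* ∈ {0,...,n} such that |z*_{k*}| > max{ (z_o* + ∑_{i=1}^{k*} |z*ᵢ|)/(k*+1), 0 } ≥ |z*_{k*+1}|, with the conventions |z*₀| = ∞ and |z*_{n+1}| = 0. -/
import Mathlib

noncomputable def fK (zo : ℝ) (z : ℕ → ℝ) (k : ℕ) : ℝ :=
  max ((zo + ∑ i ∈ Finset.Icc 1 k, |z i|) / ((k : ℝ) + 1)) 0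

lemma aux_ineq (a t c : ℝ) (ha : 0 ≤ a) (hc : 0 < c) :
    a ≤ max ((t + a) / (c + 1)) 0 ↔ a ≤ max (t / c) 0 := by
  rcases eq_or_lt_of_le ha with h | h
  · simp [← h, le_max_iff]
  · have hc1 : (0:ℝ) < c + 1 := by linarith
    rw [le_max_iff, le_max_iff]
    constructor
    · rintro (h1 | h1)
      · left; rw [le_div_iff₀ hc1] at h1; rw [le_div_iff₀ hc]; nlinarith
      · linarith
    · rintro (h1 | h1)
      · left; rw [le_div_iff₀ hc] at h1; rw [le_div_iff₀ hc1]; nlinarith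
      · linarith

lemma key (zo : ℝ) (z : ℕ → ℝ) (k : ℕ) :
    |z (k+1)| ≤ fK zo z (k+1) ↔ |z (k+1)| ≤ fK zo z k := by
  unfold fK
  rw [Finset.sum_Icc_succ_top (Nat.le_add_left 1 k)]
  have h1 : ((k+1:ℕ):ℝ) + 1 = ((k:ℝ)+1) + 1 := by push_cast; ring
  have h2 : zo + ((∑ i ∈ Finset.Icc 1 k, |z i|) + |z (k+1)|)
      = (zo + ∑ i ∈ Finset.Icc 1 k, |z i|) + |z (k+1)| := by ring
  rw [h1, h2]
  exact aux_ineq _ _ _ (abs_nonneg _) (by positivity)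

theorem stmt_12 (n : ℕ) (zo : ℝ) (z : ℕ → ℝ)
    (hsort : ∀ i j : ℕ, 1 ≤ i → i ≤ j → j ≤ n → |z j| ≤ |z i|) :
    ∃! k : ℕ, k ≤ n ∧
      (0 < k → max ((zo + ∑ i ∈ Finset.Icc 1 k, |z i|) / ((k : ℝ) + 1)) 0 < |z k|) ∧
      (k < n → |z (k + 1)| ≤ max ((zo + ∑ i ∈ Finset.Icc 1 k, |z i|) / ((k : ℝ) + 1)) 0) := by
  have hP : ∀ k : ℕ,
      (k ≤ n ∧ (0 < k → fK zo z k < |z k|) ∧ (k < n → |z (k+1)| ≤ fK zo z k)) ↔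
      (k ≤ n ∧
        (0 < k → max ((zo + ∑ i ∈ Finset.Icc 1 k, |z i|) / ((k : ℝ) + 1)) 0 < |z k|) ∧
        (k < n → |z (k + 1)| ≤ max ((zo + ∑ i ∈ Finset.Icc 1 k, |z i|) / ((k : ℝ) + 1)) 0)) := by
    intro k; rfl
  -- uniqueness lemma: no two distinct indices can both satisfy P
  have uniq : ∀ k₁ k₂ : ℕ, k₁ < k₂ →
      (k₁ ≤ n ∧ (0 < k₁ → fK zo z k₁ < |z k₁|) ∧ (k₁ < n → |z (k₁+1)| ≤ fK zo z k₁)) →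
      (k₂ ≤ n ∧ (0 < k₂ → fK zo z k₂ < |z k₂|) ∧ (k₂ < n → |z (k₂+1)| ≤ fK zo z k₂)) →
      False := by
    intro k₁ k₂ hlt h1 h2
    have hk1n : k₁ < n := lt_of_lt_of_le hlt h2.1
    have H : ∀ j, k₁ + 1 ≤ j → j ≤ n → |z j| ≤ fK zo z j := by
      intro j hj
      induction j, hj using Nat.le_induction with
      | base => intro _; exact (key zo z k₁).mpr (h1.2.2 hk1n)
      | succ j hj ih =>
        intro hjn
        have hjn' : j ≤ n := le_of_lt (Nat.lt_of_succ_le hjn)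
        have hz : |z (j+1)| ≤ |z j| :=
          hsort j (j+1) (le_trans (Nat.succ_le_succ (Nat.zero_le _)) hj)
            (Nat.le_succ j) hjn
        exact (key zo z j).mpr (le_trans hz (ih hjn'))
    exact absurd (H k₂ hlt h2.1)
      (not_le.mpr (h2.2.1 (lt_of_le_of_lt (Nat.zero_le _) hlt)))
  -- existence: take the largest k ≤ n with k = 0 or fK k < |z k|
  classical
  let A : Finset ℕ := (Finset.range (n+1)).filter (fun k => k = 0 ∨ fK zo z k < |z k|)
  have h0A : (0:ℕ) ∈ A := by
    simp [A, Nat.succ_pos]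
  have hAne : A.Nonempty := ⟨0, h0A⟩
  set K := A.max' hAne with hK
  have hKA : K ∈ A := A.max'_mem hAne
  have hKn : K ≤ n := by
    have := (Finset.mem_filter.mp hKA).1
    exact Nat.lt_succ_iff.mp (Finset.mem_range.mp this)
  have hKprop : K = 0 ∨ fK zo z K < |z K| := (Finset.mem_filter.mp hKA).2
  have hPK : K ≤ n ∧ (0 < K → fK zo z K < |z K|) ∧ (K < n → |z (K+1)| ≤ fK zo z K) := by
    refine ⟨hKn, ?_, ?_⟩
    · intro hKpos
      rcases hKprop with h | h
      · omega
      · exact h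
    · intro hKltn
      have hnot : K + 1 ∉ A := by
        intro hmem
        have := A.le_max' _ hmem
        omega
      have : ¬ (K + 1 = 0 ∨ fK zo z (K+1) < |z (K+1)|) := by
        intro h
        exact hnot (Finset.mem_filter.mpr ⟨Finset.mem_range.mpr (by omega), h⟩)
      push_neg at this
      exact (key zo z K).mp this.2
  refine ⟨K, (hP K).mp hPK, ?_⟩
  intro y hy
  rw [← hP y] at hy
  rcases lt_trichotomy y K with h | h | h
  · exact absurd (uniq y K h hy hPK) (by simp)
  · exact h
  · exact absurd (uniq K y h hPK hy) (by simp)
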